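/- Let γ be the generalized topology on ℝ whose members are the arbitrary unions of sets of the form (-∞, s) and (t, ∞) with s, t ∈ ℝ. Then: (i) a subset A ⊆ ℝ is γ-closed if and only if A is convex and closed in the standard topology of ℝ; (ii) (ℝ, γ) is normal and T1 (hence T4). -/

import Mathlib

/-- A generalized topology on `X`: contains `∅` and is closed under arbitrary unions. -/
def IsGT {X : Type*} (μ : Set (Set X)) : Prop :=
  ∅ ∈ μ ∧ ∀ S : Set (Set X), S ⊆ μ → ⋃₀ S ∈ μ

/-- The GTS `(X, μ)` is T1. -/
def GT1 {X : Type*} (μ : Set (Set X)) : Prop :=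
  ∀ x y : X, x ≠ y → ∃ M ∈ μ, x ∈ M ∧ y ∉ M

/-- The GTS `(X, μ)` is normal. -/
def GNormal {X : Type*} (μ : Set (Set X)) : Prop :=
  ∀ F₁ F₂ : Set X, F₁ᶜ ∈ μ → F₂ᶜ ∈ μ → Disjoint F₁ F₂ →
    ∃ M₁ ∈ μ, ∃ M₂ ∈ μ, F₁ ⊆ M₁ ∧ F₂ ⊆ M₂ ∧ Disjoint M₁ M₂

/-- Császár's generalized topology on `ℝ`: arbitrary unions of sets of the
form `(-∞, s)` and `(t, ∞)`. -/
def gammaR : Set (Set ℝ) :=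
  {U | ∃ S : Set (Set ℝ),
    (∀ V ∈ S, (∃ s : ℝ, V = Set.Iio s) ∨ (∃ t : ℝ, V = Set.Ioi t)) ∧ U = ⋃₀ S}

lemma iio_mem_gammaR (s : ℝ) : Set.Iio s ∈ gammaR :=
  ⟨{Set.Iio s}, by simp, by simp⟩

lemma ioi_mem_gammaR (t : ℝ) : Set.Ioi t ∈ gammaR :=
  ⟨{Set.Ioi t}, by simp, by simp⟩

lemma univ_mem_gammaR : (Set.univ : Set ℝ) ∈ gammaR := by
  refine ⟨Set.range Set.Iio, ?_, ?_⟩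
  · rintro V ⟨s, rfl⟩
    exact Or.inl ⟨s, rfl⟩
  · rw [Set.sUnion_range, Set.iUnion_Iio]

lemma empty_mem_gammaR : (∅ : Set ℝ) ∈ gammaR :=
  ⟨∅, by simp, by simp⟩

lemma gammaR_closed_iff (A : Set ℝ) : Aᶜ ∈ gammaR ↔ Convex ℝ A ∧ IsClosed A := by
  constructor
  · rintro ⟨S, hS, hU⟩
    have hA : A = ⋂₀ (compl '' S) := by
      rw [← Set.compl_sUnion, ← hU, compl_compl]
    constructor
    · rw [hA]
      refine convex_sInter ?_
      rintro W ⟨V, hV, rfl⟩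
      rcases hS V hV with ⟨s, rfl⟩ | ⟨t, rfl⟩
      · rw [Set.compl_Iio]; exact convex_Ici s
      · rw [Set.compl_Ioi]; exact convex_Iic t
    · rw [← isOpen_compl_iff, hU]
      refine isOpen_sUnion ?_
      intro V hV
      rcases hS V hV with ⟨s, rfl⟩ | ⟨t, rfl⟩
      · exact isOpen_Iio
      · exact isOpen_Ioi
  · rintro ⟨hconv, hclosed⟩
    rcases Set.eq_empty_or_nonempty A with rfl | hne
    · rw [Set.compl_empty]; exact univ_mem_gammaR
    refine ⟨{V | ((∃ s : ℝ, V = Set.Iio s) ∨ (∃ t : ℝ, V = Set.Ioi t)) ∧ V ⊆ Aᶜ},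
      fun V hV => hV.1, ?_⟩
    apply Set.Subset.antisymm
    · intro x hx
      have hord := hconv.ordConnected
      have hcases : (∀ a ∈ A, x < a) ∨ (∀ a ∈ A, a < x) := by
        by_contra h
        push_neg at h
        obtain ⟨⟨a, ha, hax⟩, ⟨b, hb, hbx⟩⟩ := h
        exact hx (hord.out ha hb ⟨hax, hbx⟩)
      rcases hcases with h | h
      · have hbdd : BddBelow A := ⟨x, fun a ha => (h a ha).le⟩
        have hmem : sInf A ∈ A := hclosed.csInf_mem hne hbdd
        refine Set.mem_sUnion.2 ⟨Set.Iio (sInf A), ⟨Or.inl ⟨_, rfl⟩, ?_⟩, h _ hmem⟩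
        intro y hy hyA
        exact absurd (csInf_le hbdd hyA) (not_le.2 hy)
      · have hbdd : BddAbove A := ⟨x, fun a ha => (h a ha).le⟩
        have hmem : sSup A ∈ A := hclosed.csSup_mem hne hbdd
        refine Set.mem_sUnion.2 ⟨Set.Ioi (sSup A), ⟨Or.inr ⟨_, rfl⟩, ?_⟩, h _ hmem⟩
        intro y hy hyA
        exact absurd (le_csSup hbdd hyA) (not_le.2 hy)
    · exact Set.sUnion_subset fun V hV => hV.2

theorem stmt9 :
    (∀ A : Set ℝ, Aᶜ ∈ gammaR ↔ Convex ℝ A ∧ IsClosed A) ∧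
    GNormal gammaR ∧ GT1 gammaR := by
  refine ⟨gammaR_closed_iff, ?_, ?_⟩
  · intro F₁ F₂ h₁ h₂ hdisj
    obtain ⟨hc₁, hcl₁⟩ := (gammaR_closed_iff F₁).1 h₁
    obtain ⟨hc₂, hcl₂⟩ := (gammaR_closed_iff F₂).1 h₂
    rcases Set.eq_empty_or_nonempty F₁ with rfl | hne₁
    · exact ⟨∅, empty_mem_gammaR, Set.univ, univ_mem_gammaR, by simp, by simp,
        by simp⟩
    rcases Set.eq_empty_or_nonempty F₂ with rfl | hne₂
    · exact ⟨Set.univ, univ_mem_gammaR, ∅, empty_mem_gammaR, by simp, by simp,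
        by simp⟩
    -- one set lies entirely below the other
    have key : ∀ (F G : Set ℝ), Convex ℝ F → Convex ℝ G → IsClosed F → IsClosed G →
        Disjoint F G → F.Nonempty → G.Nonempty → (∀ a ∈ F, ∀ b ∈ G, a < b) →
        ∃ M₁ ∈ gammaR, ∃ M₂ ∈ gammaR, F ⊆ M₁ ∧ G ⊆ M₂ ∧ Disjoint M₁ M₂ := by
      intro F G hcF hcG hclF hclG hd hneF hneG hlt
      obtain ⟨b₀, hb₀⟩ := hneG
      have hbddF : BddAbove F := ⟨b₀, fun a ha => (hlt a ha b₀ hb₀).le⟩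
      obtain ⟨a₀', ha₀'⟩ := hneF
      have hsF : sSup F ∈ F := hclF.csSup_mem ⟨a₀', ha₀'⟩ hbddF
      have hbddG : BddBelow G := ⟨a₀', fun b hb => (hlt a₀' ha₀' b hb).le⟩
      have hsG : sInf G ∈ G := hclG.csInf_mem ⟨b₀, hb₀⟩ hbddG
      have hst : sSup F < sInf G := hlt _ hsF _ hsG
      set c := (sSup F + sInf G) / 2 with hc
      have h1 : sSup F < c := by rw [hc]; linarith
      have h2 : c < sInf G := by rw [hc]; linarith
      refine ⟨Set.Iio c, iio_mem_gammaR c, Set.Ioi c, ioi_mem_gammaR c, ?_, ?_, ?_⟩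
      · exact fun a ha => lt_of_le_of_lt (le_csSup hbddF ha) h1
      · exact fun b hb => lt_of_lt_of_le h2 (csInf_le hbddG hb)
      · exact Set.disjoint_left.2 fun x hx hx' => lt_asymm (Set.mem_Iio.1 hx) (Set.mem_Ioi.1 hx')
    obtain ⟨a₀, ha₀⟩ := hne₁
    obtain ⟨b₀, hb₀⟩ := hne₂
    have hab : a₀ ≠ b₀ := fun h => Set.disjoint_left.1 hdisj ha₀ (h ▸ hb₀)
    have hcases : (∀ a ∈ F₁, ∀ b ∈ F₂, a < b) ∨ (∀ b ∈ F₂, ∀ a ∈ F₁, b < a) := by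
      rcases lt_or_gt_of_ne hab with h | h
      · left
        intro a ha b hb
        by_contra hba
        push_neg at hba
        -- b ≤ a; a₀ < b₀
        rcases le_or_gt a₀ b with h1 | h1
        · exact Set.disjoint_left.1 hdisj (hc₁.ordConnected.out ha₀ ha ⟨h1, hba⟩) hb
        · exact Set.disjoint_left.1 hdisj ha₀ (hc₂.ordConnected.out hb hb₀ ⟨h1.le, h.le⟩)
      · right
        intro b hb a ha
        by_contra hba
        push_neg at hba
        rcases le_or_gt b₀ a with h1 | h1
        · exact Set.disjoint_left.1 hdisj ha (hc₂.ordConnected.out hb₀ hb ⟨h1, hba⟩)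
        · exact Set.disjoint_left.1 hdisj (hc₁.ordConnected.out ha ha₀ ⟨h1.le, h.le⟩) hb₀
    rcases hcases with h | h
    · exact key F₁ F₂ hc₁ hc₂ hcl₁ hcl₂ hdisj ⟨a₀, ha₀⟩ ⟨b₀, hb₀⟩ h
    · obtain ⟨M₂, hM₂, M₁, hM₁, hF₂, hF₁, hd⟩ :=
        key F₂ F₁ hc₂ hc₁ hcl₂ hcl₁ hdisj.symm ⟨b₀, hb₀⟩ ⟨a₀, ha₀⟩ h
      exact ⟨M₁, hM₁, M₂, hM₂, hF₁, hF₂, hd.symm⟩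
  · intro x y hxy
    rcases lt_or_gt_of_ne hxy with h | h
    · exact ⟨Set.Iio y, iio_mem_gammaR y, h, by simp⟩
    · exact ⟨Set.Ioi y, ioi_mem_gammaR y, h, by simp⟩
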